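/- Let ε ∈ (−1,1) and ξ ∈ {−1,1}. Set α₊ := (√(1+εξ) + √(1−εξ))/2, α₋ := (√(1+εξ) − √(1−εξ))/2, k₋ := −iξα₋/√(1−ε²), k₊ := iα₊/√(1−ε²), and define φ₀₀(x₁,x₂) := exp(−(α₊/2)(x₁² + x₂²) − k₋x₁ − k₊x₂ − ξα₋ x₁x₂). Then φ₀₀ is a Schwartz function on ℝ² with values in ℂ, and it is annihilated by the two first-order differential operators a₁ and a₂: for all (x₁,x₂) ∈ ℝ², ∂₁φ₀₀ + ξ ∂₂φ₀₀ + (√(1+εξ)(x₁ + ξx₂) + iξ/√(1+εξ)) φ₀₀ = 0 and ∂₁φ₀₀ − ξ ∂₂φ₀₀ + (√(1−εξ)(x₁ − ξx₂) − iξ/√(1−εξ)) φ₀₀ = 0. -/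

import Mathlib

/-- Partial derivative in the first variable of a function `ℝ × ℝ → ℂ`. -/
noncomputable def pd1 (f : ℝ × ℝ → ℂ) (x : ℝ × ℝ) : ℂ :=
  deriv (fun t : ℝ => f (t, x.2)) x.1

/-- Partial derivative in the second variable of a function `ℝ × ℝ → ℂ`. -/
noncomputable def pd2 (f : ℝ × ℝ → ℂ) (x : ℝ × ℝ) : ℂ :=
  deriv (fun t : ℝ => f (x.1, t)) x.2


section

open ContDiff in
lemma norm_iteratedFDeriv_cexp_le (n : ℕ) (z : ℂ) :
    ‖iteratedFDeriv ℝ n Complex.exp z‖ ≤ Real.exp z.re := by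
  induction n generalizing z with
  | zero => simp [norm_iteratedFDeriv_zero, Complex.norm_exp]
  | succ n ih =>
    rw [← norm_iteratedFDeriv_fderiv]
    have hfd : fderiv ℝ Complex.exp =
        (fun w => (ContinuousLinearMap.mul ℝ ℂ) w) ∘ Complex.exp := by
      funext w
      have h1 : HasFDerivAt Complex.exp ((ContinuousLinearMap.mul ℝ ℂ) (Complex.exp w)) w := by
        have := (Complex.hasDerivAt_exp w).hasFDerivAt.restrictScalars ℝ
        refine this.congr_fderiv ?_
        ext v
        simp [smul_eq_mul, mul_comm]
      exact h1.fderiv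
    rw [hfd]
    rw [ContinuousLinearMap.iteratedFDeriv_comp_left (ContinuousLinearMap.mul ℝ ℂ)
      (Complex.contDiff_exp (𝕜 := ℝ)).contDiffAt (x := z) le_top]
    calc ‖(ContinuousLinearMap.mul ℝ ℂ).compContinuousMultilinearMap
          (iteratedFDeriv ℝ n Complex.exp z)‖
        ≤ ‖ContinuousLinearMap.mul ℝ ℂ‖ * ‖iteratedFDeriv ℝ n Complex.exp z‖ :=
          ContinuousLinearMap.norm_compContinuousMultilinearMap_le _ _
      _ ≤ 1 * Real.exp z.re := by
          apply mul_le_mul (ContinuousLinearMap.opNorm_mul_le ℝ ℂ) (ih z) (norm_nonneg _)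
            zero_le_one
      _ = Real.exp z.re := one_mul _

end
section

variable {E F : Type*} [NormedAddCommGroup E] [NormedSpace ℝ E]
  [NormedAddCommGroup F] [NormedSpace ℝ F]

lemma clm_iFD_one_le (L : E →L[ℝ] F) (x : E) : ‖iteratedFDeriv ℝ 1 ⇑L x‖ ≤ ‖L‖ := by
  apply ContinuousMultilinearMap.opNorm_le_bound (norm_nonneg L)
  intro m
  rw [iteratedFDeriv_one_apply]
  simp only [ContinuousLinearMap.fderiv]
  calc ‖L (m 0)‖ ≤ ‖L‖ * ‖m 0‖ := L.le_opNorm _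
    _ = ‖L‖ * ∏ i, ‖m i‖ := by rw [Fin.prod_univ_one]

lemma clm_iFD_ge_two (L : E →L[ℝ] F) (n : ℕ) (hn : 2 ≤ n) (x : E) :
    iteratedFDeriv ℝ n ⇑L x = 0 := by
  obtain ⟨m, rfl⟩ : ∃ m, n = m + 1 := ⟨n - 1, by omega⟩
  ext v
  rw [iteratedFDeriv_succ_apply_right]
  have h1 : (fun y => fderiv ℝ (⇑L) y) = fun _ : E => L := by
    funext y; exact L.fderiv
  rw [h1, iteratedFDeriv_const_of_ne (by omega)]
  simp

lemma clm_iFD_le (L : E →L[ℝ] F) (n : ℕ) (x : E) :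
    ‖iteratedFDeriv ℝ n ⇑L x‖ ≤ ‖L‖ * (1 + ‖x‖) := by
  have h1 : (0:ℝ) ≤ ‖L‖ := norm_nonneg _
  have hx : (0:ℝ) ≤ ‖x‖ := norm_nonneg _
  match n with
  | 0 => rw [norm_iteratedFDeriv_zero]
         calc ‖L x‖ ≤ ‖L‖ * ‖x‖ := L.le_opNorm _
           _ ≤ ‖L‖ * (1 + ‖x‖) := by nlinarith
  | 1 => calc ‖iteratedFDeriv ℝ 1 ⇑L x‖ ≤ ‖L‖ := clm_iFD_one_le L x
           _ ≤ ‖L‖ * (1 + ‖x‖) := by nlinarith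
  | (n+2) => rw [clm_iFD_ge_two L _ (by omega), norm_zero]; positivity

lemma clm_iFD_le_of_pos (L : E →L[ℝ] F) (n : ℕ) (hn : 1 ≤ n) (x : E) :
    ‖iteratedFDeriv ℝ n ⇑L x‖ ≤ ‖L‖ := by
  match n with
  | 1 => exact clm_iFD_one_le L x
  | (n+2) => rw [clm_iFD_ge_two L _ (by omega), norm_zero]; exact norm_nonneg L

end
section

variable {E : Type*} [NormedAddCommGroup E] [NormedSpace ℝ E]


lemma mul_clm_iFD_le (L1 L2 : E →L[ℝ] ℂ) (i : ℕ) (hi : 1 ≤ i) (x : E) :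
    ‖iteratedFDeriv ℝ i (fun y => L1 y * L2 y) x‖ ≤
      2 ^ i * (‖L1‖ * ‖L2‖ * (1 + ‖x‖)) := by
  have hx : (0:ℝ) ≤ ‖x‖ := norm_nonneg _
  have key : ∀ j ≤ i, ‖iteratedFDeriv ℝ j ⇑L1 x‖ * ‖iteratedFDeriv ℝ (i - j) ⇑L2 x‖ ≤
      ‖L1‖ * ‖L2‖ * (1 + ‖x‖) := by
    intro j hj
    rcases Nat.eq_zero_or_pos j with rfl | hj1
    · have h1 : ‖iteratedFDeriv ℝ 0 ⇑L1 x‖ ≤ ‖L1‖ * ‖x‖ := by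
        rw [norm_iteratedFDeriv_zero]; exact L1.le_opNorm x
      have h2 : ‖iteratedFDeriv ℝ (i - 0) ⇑L2 x‖ ≤ ‖L2‖ :=
        clm_iFD_le_of_pos L2 _ (by omega) x
      calc ‖iteratedFDeriv ℝ 0 ⇑L1 x‖ * ‖iteratedFDeriv ℝ (i - 0) ⇑L2 x‖
          ≤ (‖L1‖ * ‖x‖) * ‖L2‖ :=
            mul_le_mul h1 h2 (norm_nonneg _) (by positivity)
        _ ≤ ‖L1‖ * ‖L2‖ * (1 + ‖x‖) := by nlinarith [norm_nonneg L1, norm_nonneg L2]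
    · have h1 : ‖iteratedFDeriv ℝ j ⇑L1 x‖ ≤ ‖L1‖ := clm_iFD_le_of_pos L1 _ hj1 x
      have h2 : ‖iteratedFDeriv ℝ (i - j) ⇑L2 x‖ ≤ ‖L2‖ * (1 + ‖x‖) := clm_iFD_le L2 _ x
      calc ‖iteratedFDeriv ℝ j ⇑L1 x‖ * ‖iteratedFDeriv ℝ (i - j) ⇑L2 x‖
          ≤ ‖L1‖ * (‖L2‖ * (1 + ‖x‖)) :=
            mul_le_mul h1 h2 (norm_nonneg _) (norm_nonneg _)
        _ = ‖L1‖ * ‖L2‖ * (1 + ‖x‖) := by ring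
  calc ‖iteratedFDeriv ℝ i (fun y => L1 y * L2 y) x‖
      ≤ ∑ j ∈ Finset.range (i + 1),
          (i.choose j : ℝ) * ‖iteratedFDeriv ℝ j ⇑L1 x‖ * ‖iteratedFDeriv ℝ (i - j) ⇑L2 x‖ :=
        norm_iteratedFDeriv_mul_le (L1.contDiff) (L2.contDiff) x le_rfl
    _ ≤ ∑ j ∈ Finset.range (i + 1), (i.choose j : ℝ) * (‖L1‖ * ‖L2‖ * (1 + ‖x‖)) := by
        apply Finset.sum_le_sum
        intro j hj
        have hj' : j ≤ i := Nat.lt_succ_iff.mp (Finset.mem_range.mp hj)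
        rw [mul_assoc]
        exact mul_le_mul_of_nonneg_left (key j hj') (by positivity)
    _ = (∑ j ∈ Finset.range (i + 1), (i.choose j : ℝ)) * (‖L1‖ * ‖L2‖ * (1 + ‖x‖)) := by
        rw [← Finset.sum_mul]
    _ = 2 ^ i * (‖L1‖ * ‖L2‖ * (1 + ‖x‖)) := by
        norm_cast
        rw [Nat.sum_range_choose]

end
section

variable {E : Type*} [NormedAddCommGroup E] [NormedSpace ℝ E]


lemma smul_iFD_le (c : ℂ) (g : E → ℂ) {i : ℕ} (hg : ContDiff ℝ i g) (x : E) :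
    ‖iteratedFDeriv ℝ i (fun y => c * g y) x‖ = ‖c‖ * ‖iteratedFDeriv ℝ i g x‖ := by
  have : (fun y => c * g y) = fun y => c • g y := by
    funext y; rw [smul_eq_mul]
  rw [this, iteratedFDeriv_const_smul_apply' hg.contDiffAt]
  exact norm_smul c (iteratedFDeriv ℝ i g x)

lemma quad_iFD_le (c1 c2 c3 c4 c5 : ℂ) (L1 L2 : E →L[ℝ] ℂ) (n i : ℕ)
    (hi1 : 1 ≤ i) (hin : i ≤ n) (x : E) :
    ‖iteratedFDeriv ℝ i (fun y => c1 * (L1 y * L1 y) + c2 * (L2 y * L2 y)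
      + c3 * (L1 y * L2 y) + c4 * L1 y + c5 * L2 y) x‖ ≤
    ((2:ℝ) ^ n * (‖c1‖ * (‖L1‖ * ‖L1‖) + ‖c2‖ * (‖L2‖ * ‖L2‖) + ‖c3‖ * (‖L1‖ * ‖L2‖))
      + ‖c4‖ * ‖L1‖ + ‖c5‖ * ‖L2‖) * (1 + ‖x‖) := by
  have hx : (0:ℝ) ≤ ‖x‖ := norm_nonneg _
  have h2i : (2:ℝ) ^ i ≤ 2 ^ n := by
    apply pow_le_pow_right₀ ((by norm_num : (1:ℝ) ≤ 2)) hin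
  have hd11 : ContDiff ℝ i (fun y => L1 y * L1 y) := L1.contDiff.mul L1.contDiff
  have hd22 : ContDiff ℝ i (fun y => L2 y * L2 y) := L2.contDiff.mul L2.contDiff
  have hd12 : ContDiff ℝ i (fun y => L1 y * L2 y) := L1.contDiff.mul L2.contDiff
  have hdL1 : ContDiff ℝ i (⇑L1) := L1.contDiff
  have hdL2 : ContDiff ℝ i (⇑L2) := L2.contDiff
  have hA : ContDiff ℝ i (fun y => c1 * (L1 y * L1 y)) := contDiff_const.mul hd11
  have hB : ContDiff ℝ i (fun y => c2 * (L2 y * L2 y)) := contDiff_const.mul hd22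
  have hC : ContDiff ℝ i (fun y => c3 * (L1 y * L2 y)) := contDiff_const.mul hd12
  have hD : ContDiff ℝ i (fun y => c4 * L1 y) := contDiff_const.mul hdL1
  have hE : ContDiff ℝ i (fun y => c5 * L2 y) := contDiff_const.mul hdL2
  -- bound for each piece
  have bA : ‖iteratedFDeriv ℝ i (fun y => c1 * (L1 y * L1 y)) x‖ ≤
      2 ^ n * (‖c1‖ * (‖L1‖ * ‖L1‖)) * (1 + ‖x‖) := by
    rw [smul_iFD_le c1 _ hd11]
    calc ‖c1‖ * ‖iteratedFDeriv ℝ i (fun y => L1 y * L1 y) x‖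
        ≤ ‖c1‖ * (2 ^ i * (‖L1‖ * ‖L1‖ * (1 + ‖x‖))) :=
          mul_le_mul_of_nonneg_left (mul_clm_iFD_le L1 L1 i hi1 x) (norm_nonneg _)
      _ ≤ ‖c1‖ * (2 ^ n * (‖L1‖ * ‖L1‖ * (1 + ‖x‖))) := by
          apply mul_le_mul_of_nonneg_left _ (norm_nonneg _)
          apply mul_le_mul_of_nonneg_right h2i (by positivity)
      _ = 2 ^ n * (‖c1‖ * (‖L1‖ * ‖L1‖)) * (1 + ‖x‖) := by ring
  have bB : ‖iteratedFDeriv ℝ i (fun y => c2 * (L2 y * L2 y)) x‖ ≤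
      2 ^ n * (‖c2‖ * (‖L2‖ * ‖L2‖)) * (1 + ‖x‖) := by
    rw [smul_iFD_le c2 _ hd22]
    calc ‖c2‖ * ‖iteratedFDeriv ℝ i (fun y => L2 y * L2 y) x‖
        ≤ ‖c2‖ * (2 ^ i * (‖L2‖ * ‖L2‖ * (1 + ‖x‖))) :=
          mul_le_mul_of_nonneg_left (mul_clm_iFD_le L2 L2 i hi1 x) (norm_nonneg _)
      _ ≤ ‖c2‖ * (2 ^ n * (‖L2‖ * ‖L2‖ * (1 + ‖x‖))) := by
          apply mul_le_mul_of_nonneg_left _ (norm_nonneg _)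
          apply mul_le_mul_of_nonneg_right h2i (by positivity)
      _ = 2 ^ n * (‖c2‖ * (‖L2‖ * ‖L2‖)) * (1 + ‖x‖) := by ring
  have bC : ‖iteratedFDeriv ℝ i (fun y => c3 * (L1 y * L2 y)) x‖ ≤
      2 ^ n * (‖c3‖ * (‖L1‖ * ‖L2‖)) * (1 + ‖x‖) := by
    rw [smul_iFD_le c3 _ hd12]
    calc ‖c3‖ * ‖iteratedFDeriv ℝ i (fun y => L1 y * L2 y) x‖
        ≤ ‖c3‖ * (2 ^ i * (‖L1‖ * ‖L2‖ * (1 + ‖x‖))) :=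
          mul_le_mul_of_nonneg_left (mul_clm_iFD_le L1 L2 i hi1 x) (norm_nonneg _)
      _ ≤ ‖c3‖ * (2 ^ n * (‖L1‖ * ‖L2‖ * (1 + ‖x‖))) := by
          apply mul_le_mul_of_nonneg_left _ (norm_nonneg _)
          apply mul_le_mul_of_nonneg_right h2i (by positivity)
      _ = 2 ^ n * (‖c3‖ * (‖L1‖ * ‖L2‖)) * (1 + ‖x‖) := by ring
  have bD : ‖iteratedFDeriv ℝ i (fun y => c4 * L1 y) x‖ ≤ ‖c4‖ * ‖L1‖ * (1 + ‖x‖) := by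
    rw [smul_iFD_le c4 _ hdL1]
    have h := clm_iFD_le_of_pos L1 i hi1 x
    calc ‖c4‖ * ‖iteratedFDeriv ℝ i (⇑L1) x‖ ≤ ‖c4‖ * ‖L1‖ :=
          mul_le_mul_of_nonneg_left h (norm_nonneg _)
      _ ≤ ‖c4‖ * ‖L1‖ * (1 + ‖x‖) := by nlinarith [mul_nonneg (norm_nonneg c4) (norm_nonneg L1)]
  have bE : ‖iteratedFDeriv ℝ i (fun y => c5 * L2 y) x‖ ≤ ‖c5‖ * ‖L2‖ * (1 + ‖x‖) := by
    rw [smul_iFD_le c5 _ hdL2]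
    have h := clm_iFD_le_of_pos L2 i hi1 x
    calc ‖c5‖ * ‖iteratedFDeriv ℝ i (⇑L2) x‖ ≤ ‖c5‖ * ‖L2‖ :=
          mul_le_mul_of_nonneg_left h (norm_nonneg _)
      _ ≤ ‖c5‖ * ‖L2‖ * (1 + ‖x‖) := by nlinarith [mul_nonneg (norm_nonneg c5) (norm_nonneg L2)]
  have step1 : iteratedFDeriv ℝ i (fun y => c1 * (L1 y * L1 y) + c2 * (L2 y * L2 y)
      + c3 * (L1 y * L2 y) + c4 * L1 y + c5 * L2 y) x =
      iteratedFDeriv ℝ i (fun y => c1 * (L1 y * L1 y)) x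
      + iteratedFDeriv ℝ i (fun y => c2 * (L2 y * L2 y)) x
      + iteratedFDeriv ℝ i (fun y => c3 * (L1 y * L2 y)) x
      + iteratedFDeriv ℝ i (fun y => c4 * L1 y) x
      + iteratedFDeriv ℝ i (fun y => c5 * L2 y) x := by
    rw [iteratedFDeriv_add_apply' (((hA.add hB).add hC).add hD).contDiffAt hE.contDiffAt,
        iteratedFDeriv_add_apply' ((hA.add hB).add hC).contDiffAt hD.contDiffAt,
        iteratedFDeriv_add_apply' (hA.add hB).contDiffAt hC.contDiffAt,
        iteratedFDeriv_add_apply' hA.contDiffAt hB.contDiffAt]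
  calc ‖iteratedFDeriv ℝ i (fun y => c1 * (L1 y * L1 y) + c2 * (L2 y * L2 y)
        + c3 * (L1 y * L2 y) + c4 * L1 y + c5 * L2 y) x‖
      ≤ ‖iteratedFDeriv ℝ i (fun y => c1 * (L1 y * L1 y)) x‖
        + ‖iteratedFDeriv ℝ i (fun y => c2 * (L2 y * L2 y)) x‖
        + ‖iteratedFDeriv ℝ i (fun y => c3 * (L1 y * L2 y)) x‖
        + ‖iteratedFDeriv ℝ i (fun y => c4 * L1 y) x‖
        + ‖iteratedFDeriv ℝ i (fun y => c5 * L2 y) x‖ := by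
        rw [step1]
        set A := iteratedFDeriv ℝ i (fun y => c1 * (L1 y * L1 y)) x
        set B := iteratedFDeriv ℝ i (fun y => c2 * (L2 y * L2 y)) x
        set C := iteratedFDeriv ℝ i (fun y => c3 * (L1 y * L2 y)) x
        set D := iteratedFDeriv ℝ i (fun y => c4 * L1 y) x
        set Efd := iteratedFDeriv ℝ i (fun y => c5 * L2 y) x
        have t1 := norm_add_le (A + B + C + D) Efd
        have t2 := norm_add_le (A + B + C) D
        have t3 := norm_add_le (A + B) C
        have t4 := norm_add_le A B
        linarith
    _ ≤ ((2:ℝ) ^ n * (‖c1‖ * (‖L1‖ * ‖L1‖) + ‖c2‖ * (‖L2‖ * ‖L2‖) + ‖c3‖ * (‖L1‖ * ‖L2‖))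
        + ‖c4‖ * ‖L1‖ + ‖c5‖ * ‖L2‖) * (1 + ‖x‖) := by
        have := bA; have := bB; have := bC; have := bD; have := bE
        nlinarith [bA, bB, bC, bD, bE]

end
section

lemma gauss_poly_bound (δ : ℝ) (hδ : 0 < δ) (m : ℕ) (t : ℝ) (ht : 0 ≤ t) :
    (1 + t) ^ m * Real.exp (-δ * t ^ 2) ≤ Real.exp ((m : ℝ) ^ 2 / (4 * δ)) := by
  have h1 : (1 + t) ^ m ≤ Real.exp ((m : ℝ) * t) := by
    calc (1 + t) ^ m ≤ (Real.exp t) ^ m := by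
          apply pow_le_pow_left₀ (by linarith)
          linarith [Real.add_one_le_exp t]
      _ = Real.exp ((m : ℝ) * t) := by rw [← Real.exp_nat_mul]
  calc (1 + t) ^ m * Real.exp (-δ * t ^ 2)
      ≤ Real.exp ((m : ℝ) * t) * Real.exp (-δ * t ^ 2) := by
        apply mul_le_mul_of_nonneg_right h1 (Real.exp_nonneg _)
    _ = Real.exp ((m : ℝ) * t + -δ * t ^ 2) := by rw [← Real.exp_add]
    _ ≤ Real.exp ((m : ℝ) ^ 2 / (4 * δ)) := by
        apply Real.exp_le_exp.mpr
        rw [le_div_iff₀ (by linarith)]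
        nlinarith [sq_nonneg (2 * δ * t - (m : ℝ))]

end
section




lemma quad_decay {E : Type*} [NormedAddCommGroup E] [NormedSpace ℝ E]
    (c1 c2 c3 c4 c5 : ℂ) (L1 L2 : E →L[ℝ] ℂ) (δ : ℝ) (hδ : 0 < δ)
    (P : E → ℂ)
    (hP : P = fun y => c1 * (L1 y * L1 y) + c2 * (L2 y * L2 y)
      + c3 * (L1 y * L2 y) + c4 * L1 y + c5 * L2 y)
    (hre : ∀ x, (P x).re ≤ -δ * ‖x‖ ^ 2) (k n : ℕ) :
    ∃ C, ∀ x, ‖x‖ ^ k * ‖iteratedFDeriv ℝ n (fun y => Complex.exp (P y)) x‖ ≤ C := by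
  set M : ℝ := (2:ℝ) ^ n * (‖c1‖ * (‖L1‖ * ‖L1‖) + ‖c2‖ * (‖L2‖ * ‖L2‖)
      + ‖c3‖ * (‖L1‖ * ‖L2‖)) + ‖c4‖ * ‖L1‖ + ‖c5‖ * ‖L2‖ with hM
  have hM0 : 0 ≤ M := by positivity
  have hPcd : ContDiff ℝ ((n : ℕ∞) : WithTop ℕ∞) P := by
    rw [hP]
    exact ((((contDiff_const.mul (L1.contDiff.mul L1.contDiff)).add
      (contDiff_const.mul (L2.contDiff.mul L2.contDiff))).add
      (contDiff_const.mul (L1.contDiff.mul L2.contDiff))).add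
      (contDiff_const.mul L1.contDiff)).add (contDiff_const.mul L2.contDiff)
  refine ⟨(n.factorial : ℝ) * (M + 1) ^ n
    * Real.exp (((k + n : ℕ) : ℝ) ^ 2 / (4 * δ)), fun x => ?_⟩
  have t0 : (0:ℝ) ≤ ‖x‖ := norm_nonneg _
  have hD1 : (1:ℝ) ≤ (M + 1) * (1 + ‖x‖) := by nlinarith
  have hC : ∀ i, i ≤ n → ‖iteratedFDeriv ℝ i Complex.exp (P x)‖ ≤ Real.exp ((P x).re) :=
    fun i _ => norm_iteratedFDeriv_cexp_le i (P x)
  have hD : ∀ i, 1 ≤ i → i ≤ n →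
      ‖iteratedFDeriv ℝ i P x‖ ≤ ((M + 1) * (1 + ‖x‖)) ^ i := by
    intro i hi1 hin
    have h1 : ‖iteratedFDeriv ℝ i P x‖ ≤ M * (1 + ‖x‖) := by
      rw [hP]; exact quad_iFD_le c1 c2 c3 c4 c5 L1 L2 n i hi1 hin x
    calc ‖iteratedFDeriv ℝ i P x‖ ≤ M * (1 + ‖x‖) := h1
      _ ≤ (M + 1) * (1 + ‖x‖) := by nlinarith
      _ ≤ ((M + 1) * (1 + ‖x‖)) ^ i := le_self_pow₀ (by linarith) (by omega)
  have hcomp : ‖iteratedFDeriv ℝ n (fun y => Complex.exp (P y)) x‖ ≤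
      (n.factorial : ℝ) * Real.exp ((P x).re) * ((M + 1) * (1 + ‖x‖)) ^ n := by
    have := norm_iteratedFDeriv_comp_le (g := Complex.exp) (f := P)
      (Complex.contDiff_exp (𝕜 := ℝ)) hPcd le_rfl x hC hD
    exact this
  have e1 : Real.exp ((P x).re) ≤ Real.exp (-δ * ‖x‖ ^ 2) := Real.exp_le_exp.mpr (hre x)
  have e2 : ‖x‖ ^ k ≤ (1 + ‖x‖) ^ k := pow_le_pow_left₀ t0 (by linarith) k
  calc ‖x‖ ^ k * ‖iteratedFDeriv ℝ n (fun y => Complex.exp (P y)) x‖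
      ≤ (1 + ‖x‖) ^ k * ((n.factorial : ℝ) * Real.exp (-δ * ‖x‖ ^ 2)
          * ((M + 1) * (1 + ‖x‖)) ^ n) := by
        apply mul_le_mul e2 _ (norm_nonneg _) (by positivity)
        calc ‖iteratedFDeriv ℝ n (fun y => Complex.exp (P y)) x‖
            ≤ (n.factorial : ℝ) * Real.exp ((P x).re) * ((M + 1) * (1 + ‖x‖)) ^ n := hcomp
          _ ≤ (n.factorial : ℝ) * Real.exp (-δ * ‖x‖ ^ 2) * ((M + 1) * (1 + ‖x‖)) ^ n := by
              apply mul_le_mul_of_nonneg_right _ (by positivity)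
              exact mul_le_mul_of_nonneg_left e1 (by positivity)
    _ = (n.factorial : ℝ) * (M + 1) ^ n
          * ((1 + ‖x‖) ^ (k + n) * Real.exp (-δ * ‖x‖ ^ 2)) := by
        rw [mul_pow, pow_add]; ring
    _ ≤ (n.factorial : ℝ) * (M + 1) ^ n * Real.exp (((k + n : ℕ) : ℝ) ^ 2 / (4 * δ)) := by
        apply mul_le_mul_of_nonneg_left _ (by positivity)
        exact gauss_poly_bound δ hδ (k + n) ‖x‖ t0

end


lemma hasDerivAt_cexp_quad (A B C : ℂ) (t0 : ℝ) :
    HasDerivAt (fun t : ℝ => Complex.exp (A * (t:ℂ) ^ 2 + B * (t:ℂ) + C))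
      (Complex.exp (A * (t0:ℂ) ^ 2 + B * (t0:ℂ) + C) * (2 * A * (t0:ℂ) + B)) t0 := by
  have h : HasDerivAt (fun z : ℂ => A * z ^ 2 + B * z + C)
      (2 * A * (t0:ℂ) + B) (t0:ℂ) := by
    have h1 := (hasDerivAt_pow 2 ((t0:ℂ))).const_mul A
    have h2 := (hasDerivAt_id ((t0:ℂ))).const_mul B
    have h3 := (h1.add h2).add_const C
    refine h3.congr_deriv ?_
    rw [show (2:ℕ) - 1 = 1 from rfl]
    push_cast
    ring
  exact (h.comp_ofReal).cexp


lemma coeff_zero₁ (αp αm s sp sm ξ x₁ x₂ : ℝ) (hξ : ξ = -1 ∨ ξ = 1)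
    (hp : αp = (sp + sm) / 2) (hm : αm = (sp - sm) / 2) (hs : s = sp * sm)
    (hsp : sp ≠ 0) (hsm : sm ≠ 0) :
    (2 * ((-(αp / 2) : ℝ) : ℂ) * (x₁:ℂ) + ((-(ξ * αm) : ℝ) : ℂ) * (x₂:ℂ)
        + ((ξ * αm / s : ℝ) : ℂ) * Complex.I)
      + (ξ:ℂ) * (2 * ((-(αp / 2) : ℝ) : ℂ) * (x₂:ℂ) + ((-(ξ * αm) : ℝ) : ℂ) * (x₁:ℂ)
        + ((-(αp / s) : ℝ) : ℂ) * Complex.I)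
      + (((sp * (x₁ + ξ * x₂) : ℝ) : ℂ) + Complex.I * (ξ:ℂ) / ((sp : ℝ) : ℂ)) = 0 := by
  subst hp hm hs
  have hspC : ((sp:ℝ):ℂ) ≠ 0 := by exact_mod_cast hsp
  have hsmC : ((sm:ℝ):ℂ) ≠ 0 := by exact_mod_cast hsm
  rcases hξ with rfl | rfl <;>
  · push_cast
    field_simp
    ring

lemma coeff_zero₂ (αp αm s sp sm ξ x₁ x₂ : ℝ) (hξ : ξ = -1 ∨ ξ = 1)
    (hp : αp = (sp + sm) / 2) (hm : αm = (sp - sm) / 2) (hs : s = sp * sm)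
    (hsp : sp ≠ 0) (hsm : sm ≠ 0) :
    (2 * ((-(αp / 2) : ℝ) : ℂ) * (x₁:ℂ) + ((-(ξ * αm) : ℝ) : ℂ) * (x₂:ℂ)
        + ((ξ * αm / s : ℝ) : ℂ) * Complex.I)
      - (ξ:ℂ) * (2 * ((-(αp / 2) : ℝ) : ℂ) * (x₂:ℂ) + ((-(ξ * αm) : ℝ) : ℂ) * (x₁:ℂ)
        + ((-(αp / s) : ℝ) : ℂ) * Complex.I)
      + (((sm * (x₁ - ξ * x₂) : ℝ) : ℂ) - Complex.I * (ξ:ℂ) / ((sm : ℝ) : ℂ)) = 0 := by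
  subst hp hm hs
  have hspC : ((sp:ℝ):ℂ) ≠ 0 := by exact_mod_cast hsp
  have hsmC : ((sm:ℝ):ℂ) ≠ 0 := by exact_mod_cast hsm
  rcases hξ with rfl | rfl <;>
  · push_cast
    field_simp
    ring

lemma quad_re_bound (αp αm w a b t δ : ℝ) (hδdef : δ = (αp - |αm|) / 2)
    (h1 : w ≤ |αm|) (h2 : -|αm| ≤ w) (hn : t ^ 2 ≤ a ^ 2 + b ^ 2) (hδ0 : 0 < δ) :
    -(αp / 2) * a ^ 2 + -(αp / 2) * b ^ 2 + -w * (a * b) ≤ -δ * t ^ 2 := by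
  have step1 : -(αp / 2) * a ^ 2 + -(αp / 2) * b ^ 2 + -w * (a * b)
      ≤ -δ * (a ^ 2 + b ^ 2) := by
    nlinarith [mul_nonneg (by linarith : (0:ℝ) ≤ |αm| + w) (sq_nonneg (a + b)),
      mul_nonneg (by linarith : (0:ℝ) ≤ |αm| - w) (sq_nonneg (a - b))]
  have step2 : -δ * (a ^ 2 + b ^ 2) ≤ -δ * t ^ 2 := by
    nlinarith [mul_nonneg hδ0.le (by linarith : (0:ℝ) ≤ a ^ 2 + b ^ 2 - t ^ 2)]
  linarith


set_option maxHeartbeats 1000000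

/-- Example one, vacuum: the function
`φ₀₀(x₁,x₂) = exp(−(α₊/2)(x₁²+x₂²) − k₋x₁ − k₊x₂ − ξα₋x₁x₂)` is a Schwartz
function on `ℝ²` and is annihilated by the differential operators `a₁, a₂`. -/
theorem example_one_vacuum
    (ε ξ : ℝ) (hε : ε ∈ Set.Ioo (-1 : ℝ) 1) (hξ : ξ = -1 ∨ ξ = 1)
    (αp αm : ℝ) (km kp : ℂ)
    (hαp : αp = (Real.sqrt (1 + ε * ξ) + Real.sqrt (1 - ε * ξ)) / 2)
    (hαm : αm = (Real.sqrt (1 + ε * ξ) - Real.sqrt (1 - ε * ξ)) / 2)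
    (hkm : km = -Complex.I * (ξ : ℂ) * (αm : ℂ) / ((Real.sqrt (1 - ε ^ 2) : ℝ) : ℂ))
    (hkp : kp = Complex.I * (αp : ℂ) / ((Real.sqrt (1 - ε ^ 2) : ℝ) : ℂ))
    (φ : ℝ × ℝ → ℂ)
    (hφ : ∀ x₁ x₂ : ℝ, φ (x₁, x₂) = Complex.exp
      (-((αp / 2 : ℝ) : ℂ) * ((x₁ : ℂ) ^ 2 + (x₂ : ℂ) ^ 2)
        - km * (x₁ : ℂ) - kp * (x₂ : ℂ)
        - ((ξ * αm : ℝ) : ℂ) * (x₁ : ℂ) * (x₂ : ℂ))) :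
    (∃ Φ : SchwartzMap (ℝ × ℝ) ℂ, ⇑Φ = φ) ∧
    (∀ x₁ x₂ : ℝ,
      pd1 φ (x₁, x₂) + (ξ : ℂ) * pd2 φ (x₁, x₂)
        + (((Real.sqrt (1 + ε * ξ) * (x₁ + ξ * x₂) : ℝ) : ℂ)
            + Complex.I * (ξ : ℂ) / ((Real.sqrt (1 + ε * ξ) : ℝ) : ℂ)) * φ (x₁, x₂) = 0) ∧
    (∀ x₁ x₂ : ℝ,
      pd1 φ (x₁, x₂) - (ξ : ℂ) * pd2 φ (x₁, x₂)
        + (((Real.sqrt (1 - ε * ξ) * (x₁ - ξ * x₂) : ℝ) : ℂ)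
            - Complex.I * (ξ : ℂ) / ((Real.sqrt (1 - ε * ξ) : ℝ) : ℂ)) * φ (x₁, x₂) = 0) := by
  obtain ⟨hε1, hε2⟩ := hε
  have hξ2 : ξ ^ 2 = 1 := by rcases hξ with rfl | rfl <;> norm_num
  have h1p : 0 < 1 + ε * ξ := by rcases hξ with rfl | rfl <;> nlinarith
  have h1m : 0 < 1 - ε * ξ := by rcases hξ with rfl | rfl <;> nlinarith
  have h2 : 0 < 1 - ε ^ 2 := by nlinarith
  set sp := Real.sqrt (1 + ε * ξ) with hspdef
  set sm := Real.sqrt (1 - ε * ξ) with hsmdef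
  set s := Real.sqrt (1 - ε ^ 2) with hsdef
  have hsp0 : 0 < sp := Real.sqrt_pos.mpr h1p
  have hsm0 : 0 < sm := Real.sqrt_pos.mpr h1m
  have hs0 : 0 < s := Real.sqrt_pos.mpr h2
  have hsps : s = sp * sm := by
    rw [hsdef, hspdef, hsmdef, ← Real.sqrt_mul h1p.le]
    congr 1
    nlinarith [hξ2]
  have hppm : αp + αm = sp := by rw [hαp, hαm]; ring
  have hpmm : αp - αm = sm := by rw [hαp, hαm]; ring
  have hαp0 : 0 < αp := by linarith
  have habs : |αm| < αp := abs_lt.mpr ⟨by linarith, by linarith⟩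
  have hspC : ((sp : ℝ) : ℂ) ≠ 0 := by exact_mod_cast hsp0.ne'
  have hsmC : ((sm : ℝ) : ℂ) ≠ 0 := by exact_mod_cast hsm0.ne'
  have hsC0 : ((s : ℝ) : ℂ) ≠ 0 := by exact_mod_cast hs0.ne'
  have hsC : ((s : ℝ) : ℂ) = (sp : ℂ) * (sm : ℂ) := by exact_mod_cast hsps
  have hαpC : ((αp : ℝ) : ℂ) = ((sp : ℂ) + (sm : ℂ)) / 2 := by
    have : αp = (sp + sm) / 2 := by linarith
    exact_mod_cast this
  have hαmC : ((αm : ℝ) : ℂ) = ((sp : ℂ) - (sm : ℂ)) / 2 := by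
    have : αm = (sp - sm) / 2 := by linarith
    exact_mod_cast this
  have hkm' : km = ((-(ξ * αm / s) : ℝ) : ℂ) * Complex.I := by
    rw [hkm]; push_cast; ring
  have hkp' : kp = ((αp / s : ℝ) : ℂ) * Complex.I := by
    rw [hkp]; push_cast; ring
  set L1 : (ℝ × ℝ) →L[ℝ] ℂ := Complex.ofRealCLM.comp (ContinuousLinearMap.fst ℝ ℝ ℝ) with hL1def
  set L2 : (ℝ × ℝ) →L[ℝ] ℂ := Complex.ofRealCLM.comp (ContinuousLinearMap.snd ℝ ℝ ℝ) with hL2def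
  have hL1y : ∀ y : ℝ × ℝ, L1 y = ((y.1 : ℝ) : ℂ) := fun y => rfl
  have hL2y : ∀ y : ℝ × ℝ, L2 y = ((y.2 : ℝ) : ℂ) := fun y => rfl
  set c1 : ℂ := ((-(αp / 2) : ℝ) : ℂ) with hc1
  set c3 : ℂ := ((-(ξ * αm) : ℝ) : ℂ) with hc3
  set c4 : ℂ := ((ξ * αm / s : ℝ) : ℂ) * Complex.I with hc4
  set c5 : ℂ := ((-(αp / s) : ℝ) : ℂ) * Complex.I with hc5
  have hc4km : c4 = -km := by rw [hkm', hc4]; push_cast; ring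
  have hc5kp : c5 = -kp := by rw [hkp', hc5]; push_cast; ring
  set P : ℝ × ℝ → ℂ := fun y => c1 * (L1 y * L1 y) + c1 * (L2 y * L2 y)
      + c3 * (L1 y * L2 y) + c4 * L1 y + c5 * L2 y with hPdef
  have hφP : φ = fun y => Complex.exp (P y) := by
    funext y
    obtain ⟨a, b⟩ := y
    rw [hφ a b]
    congr 1
    simp only [hPdef, hL1y, hL2y, hc1, hc3, hc4km, hc5kp]
    push_cast
    ring
  -- real part estimate
  set δ : ℝ := (αp - |αm|) / 2 with hδdef
  have hδ : 0 < δ := by rw [hδdef]; linarith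
  have hξabs1 : ξ * αm ≤ |αm| := by
    rcases hξ with rfl | rfl
    · rw [neg_one_mul]; exact neg_le_abs αm
    · rw [one_mul]; exact le_abs_self αm
  have hξabs2 : -|αm| ≤ ξ * αm := by
    rcases hξ with rfl | rfl
    · rw [neg_one_mul]; exact neg_le_neg (le_abs_self αm)
    · rw [one_mul]; exact neg_abs_le αm
  have hnormsq : ∀ x : ℝ × ℝ, ‖x‖ ^ 2 ≤ x.1 ^ 2 + x.2 ^ 2 := by
    intro x
    have h : ‖x‖ = max ‖x.1‖ ‖x.2‖ := Prod.norm_def x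
    rcases max_cases ‖x.1‖ ‖x.2‖ with ⟨h1, _⟩ | ⟨h1, _⟩ <;>
      rw [h, h1, Real.norm_eq_abs, sq_abs] <;>
      nlinarith [sq_nonneg x.1, sq_nonneg x.2]
  have hre : ∀ x : ℝ × ℝ, (P x).re ≤ -δ * ‖x‖ ^ 2 := by
    intro x
    have hPre : (P x).re = -(αp / 2) * x.1 ^ 2 + -(αp / 2) * x.2 ^ 2
        + -(ξ * αm) * (x.1 * x.2) := by
      simp only [hPdef, hL1y, hL2y, hc1, hc3, hc4, hc5]
      simp [Complex.add_re, Complex.mul_re, Complex.mul_im, Complex.ofReal_re,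
        Complex.ofReal_im, Complex.I_re, Complex.I_im]
      ring
    rw [hPre]
    exact quad_re_bound αp αm (ξ * αm) x.1 x.2 ‖x‖ δ hδdef hξabs1 hξabs2 (hnormsq x) hδ
  have hPsm : ∀ (N : WithTop ℕ∞), ContDiff ℝ N P := by
    intro N
    rw [hPdef]
    exact ((((contDiff_const.mul (L1.contDiff.mul L1.contDiff)).add
      (contDiff_const.mul (L2.contDiff.mul L2.contDiff))).add
      (contDiff_const.mul (L1.contDiff.mul L2.contDiff))).add
      (contDiff_const.mul L1.contDiff)).add (contDiff_const.mul L2.contDiff)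
  have heφ : ∀ a b : ℝ, φ (a, b) = Complex.exp (c1 * (a:ℂ) ^ 2
      + (c3 * (b:ℂ) + c4) * (a:ℂ) + (c1 * (b:ℂ) ^ 2 + c5 * (b:ℂ))) := by
    intro a b
    rw [hφ a b]
    congr 1
    rw [hc1, hc3, hc4km, hc5kp]
    push_cast
    ring
  have heφ2 : ∀ a b : ℝ, φ (a, b) = Complex.exp (c1 * (b:ℂ) ^ 2
      + (c3 * (a:ℂ) + c5) * (b:ℂ) + (c1 * (a:ℂ) ^ 2 + c4 * (a:ℂ))) := by
    intro a b
    rw [hφ a b]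
    congr 1
    rw [hc1, hc3, hc4km, hc5kp]
    push_cast
    ring
  have pd1_eq : ∀ a b : ℝ, pd1 φ (a, b) = φ (a, b) * (2 * c1 * (a:ℂ) + c3 * (b:ℂ) + c4) := by
    intro a b
    have hfun : (fun t : ℝ => φ (t, b)) = fun t : ℝ => Complex.exp (c1 * (t:ℂ) ^ 2
        + (c3 * (b:ℂ) + c4) * (t:ℂ) + (c1 * (b:ℂ) ^ 2 + c5 * (b:ℂ))) := by
      funext t
      exact heφ t b
    unfold pd1
    show deriv (fun t : ℝ => φ (t, b)) a = _
    rw [hfun, (hasDerivAt_cexp_quad c1 (c3 * (b:ℂ) + c4)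
      (c1 * (b:ℂ) ^ 2 + c5 * (b:ℂ)) a).deriv, ← heφ a b]
    ring
  have pd2_eq : ∀ a b : ℝ, pd2 φ (a, b) = φ (a, b) * (2 * c1 * (b:ℂ) + c3 * (a:ℂ) + c5) := by
    intro a b
    have hfun : (fun t : ℝ => φ (a, t)) = fun t : ℝ => Complex.exp (c1 * (t:ℂ) ^ 2
        + (c3 * (a:ℂ) + c5) * (t:ℂ) + (c1 * (a:ℂ) ^ 2 + c4 * (a:ℂ))) := by
      funext t
      exact heφ2 a t
    unfold pd2
    show deriv (fun t : ℝ => φ (a, t)) b = _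
    rw [hfun, (hasDerivAt_cexp_quad c1 (c3 * (a:ℂ) + c5)
      (c1 * (a:ℂ) ^ 2 + c4 * (a:ℂ)) b).deriv, ← heφ2 a b]
    ring
  refine ⟨⟨⟨φ, ?_, ?_⟩, rfl⟩, ?_, ?_⟩
  · rw [hφP]
    exact (Complex.contDiff_exp (𝕜 := ℝ)).comp (hPsm _)
  · intro k n
    rw [hφP]
    exact quad_decay c1 c1 c3 c4 c5 L1 L2 δ hδ P hPdef hre k n
  · intro x₁ x₂
    rw [pd1_eq x₁ x₂, pd2_eq x₁ x₂]
    have hco : (2 * c1 * (x₁:ℂ) + c3 * (x₂:ℂ) + c4)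
        + (ξ:ℂ) * (2 * c1 * (x₂:ℂ) + c3 * (x₁:ℂ) + c5)
        + (((sp * (x₁ + ξ * x₂) : ℝ) : ℂ) + Complex.I * (ξ:ℂ) / ((sp : ℝ) : ℂ)) = 0 := by
      rw [hc1, hc3, hc4, hc5]
      exact coeff_zero₁ αp αm s sp sm ξ x₁ x₂ hξ (by linarith) (by linarith) hsps
        hsp0.ne' hsm0.ne'
    calc φ (x₁, x₂) * (2 * c1 * (x₁:ℂ) + c3 * (x₂:ℂ) + c4)
          + (ξ:ℂ) * (φ (x₁, x₂) * (2 * c1 * (x₂:ℂ) + c3 * (x₁:ℂ) + c5))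
          + (((sp * (x₁ + ξ * x₂) : ℝ) : ℂ) + Complex.I * (ξ:ℂ) / ((sp : ℝ) : ℂ)) * φ (x₁, x₂)
        = ((2 * c1 * (x₁:ℂ) + c3 * (x₂:ℂ) + c4)
          + (ξ:ℂ) * (2 * c1 * (x₂:ℂ) + c3 * (x₁:ℂ) + c5)
          + (((sp * (x₁ + ξ * x₂) : ℝ) : ℂ) + Complex.I * (ξ:ℂ) / ((sp : ℝ) : ℂ)))
            * φ (x₁, x₂) := by ring
      _ = 0 := by rw [hco, zero_mul]
  · intro x₁ x₂
    rw [pd1_eq x₁ x₂, pd2_eq x₁ x₂]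
    have hco : (2 * c1 * (x₁:ℂ) + c3 * (x₂:ℂ) + c4)
        - (ξ:ℂ) * (2 * c1 * (x₂:ℂ) + c3 * (x₁:ℂ) + c5)
        + (((sm * (x₁ - ξ * x₂) : ℝ) : ℂ) - Complex.I * (ξ:ℂ) / ((sm : ℝ) : ℂ)) = 0 := by
      rw [hc1, hc3, hc4, hc5]
      exact coeff_zero₂ αp αm s sp sm ξ x₁ x₂ hξ (by linarith) (by linarith) hsps
        hsp0.ne' hsm0.ne'
    calc φ (x₁, x₂) * (2 * c1 * (x₁:ℂ) + c3 * (x₂:ℂ) + c4)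
          - (ξ:ℂ) * (φ (x₁, x₂) * (2 * c1 * (x₂:ℂ) + c3 * (x₁:ℂ) + c5))
          + (((sm * (x₁ - ξ * x₂) : ℝ) : ℂ) - Complex.I * (ξ:ℂ) / ((sm : ℝ) : ℂ)) * φ (x₁, x₂)
        = ((2 * c1 * (x₁:ℂ) + c3 * (x₂:ℂ) + c4)
          - (ξ:ℂ) * (2 * c1 * (x₂:ℂ) + c3 * (x₁:ℂ) + c5)
          + (((sm * (x₁ - ξ * x₂) : ℝ) : ℂ) - Complex.I * (ξ:ℂ) / ((sm : ℝ) : ℂ)))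
            * φ (x₁, x₂) := by ring
      _ = 0 := by rw [hco, zero_mul]
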